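/- arXiv:0804.3851 — 6 statements merged into one kernel-verified Lean document; each statement's English description precedes it below -/
import Mathlib

section
/- Let h be a nondegenerate σ-hermitian form of Witt index 2 on a K-vector space V of finite dimension n ≥ 5. Then for every 1-dimensional totally isotropic subspace P of V and every 2-dimensional totally isotropic subspace M of V with P not contained in M, there exists exactly one 2-dimensional totally isotropic subspace L of V such that P ⊆ L and L ∩ M ≠ {0}. (This is the main axiom showing that the classical quadrangle Q(V,h), whose points are the 1-dimensional totally isotropic subspaces and whose lines are the 2-dimensional totally isotropic subspaces of V, is a generalized quadrangle.) -/
/-- A σ-hermitian form `h` of Witt index 2 on a vector space of dimension at least 5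
yields a generalized quadrangle: for every 1-dimensional totally isotropic subspace `P`
and every 2-dimensional totally isotropic subspace `M` with `P ⊄ M` there is exactly one
2-dimensional totally isotropic subspace `L` with `P ⊆ L` and `L ∩ M ≠ 0`. -/
theorem classical_quadrangle_axiom
    (K V : Type*) [Field K] [AddCommGroup V] [Module K V] [FiniteDimensional K V]
    (hchar : (2 : K) ≠ 0)
    (hdim : 5 ≤ Module.finrank K V)
    (σ : K ≃+* K) (hσ : ∀ a, σ (σ a) = a)
    (h : V → V → K)
    (hadd₁ : ∀ x x' y, h (x + x') y = h x y + h x' y)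
    (hadd₂ : ∀ x y y', h x (y + y') = h x y + h x y')
    (hsmul : ∀ (a b : K) (x y : V), h (a • x) (b • y) = a * σ b * h x y)
    (hherm : ∀ x y, h x y = σ (h y x))
    (hnondeg : ∀ x, (∀ y, h x y = 0) → x = 0)
    (hwitt₂ : ∃ U : Submodule K V, Module.finrank K U = 2 ∧ ∀ x ∈ U, ∀ y ∈ U, h x y = 0)
    (hwittmax : ∀ U : Submodule K V, (∀ x ∈ U, ∀ y ∈ U, h x y = 0) →
      Module.finrank K U ≤ 2) :
    ∀ P M : Submodule K V,
      Module.finrank K P = 1 → (∀ x ∈ P, ∀ y ∈ P, h x y = 0) →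
      Module.finrank K M = 2 → (∀ x ∈ M, ∀ y ∈ M, h x y = 0) →
      ¬ P ≤ M →
      ∃! L : Submodule K V,
        Module.finrank K L = 2 ∧ (∀ x ∈ L, ∀ y ∈ L, h x y = 0) ∧ P ≤ L ∧ L ⊓ M ≠ ⊥ := by
  -- scalar helpers
  have hsl : ∀ (a : K) (x y : V), h (a • x) y = a * h x y := by
    intro a x y
    have := hsmul a 1 x y
    rwa [one_smul, map_one, mul_one] at this
  have hsr : ∀ (b : K) (x y : V), h x (b • y) = σ b * h x y := by
    intro b x y
    have := hsmul 1 b x y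
    rwa [one_smul, one_mul] at this
  intro P M hP1 hPiso hM2 hMiso hPM
  -- a generator of P
  obtain ⟨v, hv0, hvspan⟩ := finrank_eq_one_iff'.mp hP1
  set p : V := (v : V) with hpdef
  have hp0 : p ≠ 0 := fun hh => hv0 (Subtype.ext hh)
  have hpP : p ∈ P := v.2
  have hPspan : P = Submodule.span K {p} := by
    apply le_antisymm
    · intro x hx
      obtain ⟨c, hc⟩ := hvspan ⟨x, hx⟩
      have hc' : c • p = x := congrArg Subtype.val hc
      rw [← hc']
      exact Submodule.smul_mem _ _ (Submodule.mem_span_singleton_self p)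
    · exact (Submodule.span_singleton_le_iff_mem p P).mpr hpP
  have hpM : p ∉ M := by
    intro hh
    exact hPM (hPspan ▸ (Submodule.span_singleton_le_iff_mem p M).mpr hh)
  have hPMbot : P ⊓ M = ⊥ := by
    rw [eq_bot_iff]
    rintro x ⟨hxP, hxM⟩
    rw [hPspan] at hxP
    obtain ⟨c, rfl⟩ := Submodule.mem_span_singleton.mp hxP
    rcases eq_or_ne c 0 with rfl | hc
    · simp
    · exact absurd (by simpa [smul_smul, inv_mul_cancel₀ hc] using
        Submodule.smul_mem M c⁻¹ hxM) hpM
  -- there is m ∈ M with h m p ≠ 0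
  have hex : ∃ m ∈ M, h m p ≠ 0 := by
    by_contra hc
    push_neg at hc
    have hc' : ∀ m ∈ M, h p m = 0 := by
      intro m hm
      rw [hherm, hc m hm, map_zero]
    have hTiso : ∀ x ∈ P ⊔ M, ∀ y ∈ P ⊔ M, h x y = 0 := by
      intro x hx y hy
      obtain ⟨x₁, hx₁, x₂, hx₂, rfl⟩ := Submodule.mem_sup.mp hx
      obtain ⟨y₁, hy₁, y₂, hy₂, rfl⟩ := Submodule.mem_sup.mp hy
      rw [hPspan] at hx₁ hy₁
      obtain ⟨a, rfl⟩ := Submodule.mem_span_singleton.mp hx₁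
      obtain ⟨b, rfl⟩ := Submodule.mem_span_singleton.mp hy₁
      rw [hadd₁, hadd₂, hadd₂, hsmul, hsl, hsr,
        hPiso p hpP p hpP, hc' y₂ hy₂, hc x₂ hx₂, hMiso x₂ hx₂ y₂ hy₂]
      ring
    have h3 : Module.finrank K ↥(P ⊔ M) = 3 := by
      have := Submodule.finrank_sup_add_finrank_inf_eq P M
      rw [hPMbot, finrank_bot, hP1, hM2] at this
      omega
    have := hwittmax (P ⊔ M) hTiso
    omega
  obtain ⟨m, hmM, hmp⟩ := hex
  -- the functional x ↦ h x p
  let φ : V →ₗ[K] K :=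
    { toFun := fun x => h x p
      map_add' := fun x y => hadd₁ x y p
      map_smul' := fun a x => by
        simp only [RingHom.id_apply, smul_eq_mul]
        exact hsl a x p }
  set M₀ : Submodule K V := M ⊓ LinearMap.ker φ with hM₀def
  have hM₀M : M₀ ≤ M := inf_le_left
  have hM₀lt : M₀ < M := lt_of_le_of_ne hM₀M (by
    intro e
    apply hmp
    have : m ∈ M₀ := e ▸ hmM
    exact this.2)
  have hM₀le1 : Module.finrank K M₀ ≤ 1 := by
    have := Submodule.finrank_lt_finrank_of_lt hM₀lt
    omega
  -- a nonzero element of M₀ via rank-nullity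
  have hM₀ne : M₀ ≠ ⊥ := by
    set ψ := φ.domRestrict M with hψdef
    have hrn := LinearMap.finrank_range_add_finrank_ker ψ
    have hr1 : Module.finrank K (LinearMap.range ψ) ≤ 1 := by
      have := Submodule.finrank_le (LinearMap.range ψ)
      simpa [Module.finrank_self] using this
    have hM2' : Module.finrank K ↥M = 2 := hM2
    have hker : 1 ≤ Module.finrank K (LinearMap.ker ψ) := by omega
    have hkne : LinearMap.ker ψ ≠ ⊥ := by
      intro e
      rw [e, finrank_bot] at hker
      omega
    obtain ⟨x, hxk, hx0⟩ := (LinearMap.ker ψ).ne_bot_iff.mp hkne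
    rw [Submodule.ne_bot_iff]
    refine ⟨(x : V), ⟨x.2, ?_⟩, fun e => hx0 (Subtype.ext e)⟩
    simpa [ψ, LinearMap.mem_ker] using hxk
  obtain ⟨m₀, hm₀M₀, hm₀0⟩ := Submodule.ne_bot_iff _ |>.mp hM₀ne
  have hM₀1 : Module.finrank K M₀ = 1 := by
    have hle : Submodule.span K {m₀} ≤ M₀ :=
      (Submodule.span_singleton_le_iff_mem m₀ M₀).mpr hm₀M₀
    have := Submodule.finrank_mono hle
    rw [finrank_span_singleton hm₀0] at this
    omega
  -- every nonzero element of M₀ spans it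
  have hM₀span : ∀ x ∈ M₀, x ≠ 0 → Submodule.span K {x} = M₀ := by
    intro x hx hx0
    exact Submodule.eq_of_le_of_finrank_eq
      ((Submodule.span_singleton_le_iff_mem x M₀).mpr hx)
      (by rw [finrank_span_singleton hx0, hM₀1])
  -- cross-isotropy between P and M₀
  have hcross : ∀ u ∈ P, ∀ w ∈ M₀, h u w = 0 ∧ h w u = 0 := by
    intro u hu w hw
    rw [hPspan] at hu
    obtain ⟨a, rfl⟩ := Submodule.mem_span_singleton.mp hu
    have hwp : h w p = 0 := hw.2
    constructor
    · rw [hsl, hherm, hwp, map_zero, mul_zero]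
    · rw [hsr, hwp, mul_zero]
  set L : Submodule K V := P ⊔ M₀ with hLdef
  have hPM₀bot : P ⊓ M₀ = ⊥ := by
    rw [eq_bot_iff, ← hPMbot]
    exact inf_le_inf_left P hM₀M
  have hL2 : Module.finrank K L = 2 := by
    have := Submodule.finrank_sup_add_finrank_inf_eq P M₀
    rw [hPM₀bot, finrank_bot, hP1, hM₀1, ← hLdef] at this
    omega
  have hLiso : ∀ x ∈ L, ∀ y ∈ L, h x y = 0 := by
    intro x hx y hy
    obtain ⟨x₁, hx₁, x₂, hx₂, rfl⟩ := Submodule.mem_sup.mp hx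
    obtain ⟨y₁, hy₁, y₂, hy₂, rfl⟩ := Submodule.mem_sup.mp hy
    rw [hadd₁, hadd₂, hadd₂,
      hPiso x₁ hx₁ y₁ hy₁, (hcross x₁ hx₁ y₂ hy₂).1, (hcross y₁ hy₁ x₂ hx₂).2,
      hMiso x₂ (hM₀M hx₂) y₂ (hM₀M hy₂)]
    ring
  refine ⟨L, ⟨hL2, hLiso, le_sup_left, ?_⟩, ?_⟩
  · rw [Submodule.ne_bot_iff]
    exact ⟨m₀, ⟨Submodule.mem_sup_right hm₀M₀, hM₀M hm₀M₀⟩, hm₀0⟩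
  · rintro L' ⟨hL'2, hL'iso, hPL', hL'M⟩
    obtain ⟨x, hx, hx0⟩ := Submodule.ne_bot_iff _ |>.mp hL'M
    have hxL' : x ∈ L' := hx.1
    have hxM : x ∈ M := hx.2
    have hxp : h x p = 0 := hL'iso x hxL' p (hPL' hpP)
    have hxM₀ : x ∈ M₀ := ⟨hxM, hxp⟩
    have hM₀L' : M₀ ≤ L' := by
      rw [← hM₀span x hxM₀ hx0]
      exact (Submodule.span_singleton_le_iff_mem x L').mpr hxL'
    have hLL' : L ≤ L' := sup_le hPL' hM₀L'
    exact (Submodule.eq_of_le_of_finrank_eq hLL' (by rw [hL2, hL'2])).symm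
end

section
/- Let L₁ and L₂ be 2-dimensional subspaces of V, let xᵢ, yᵢ be a basis of Lᵢ, and set uᵢ = xᵢ ∧ yᵢ for i = 1, 2. Then L₁ ∩ L₂ ≠ {0} if and only if u₁ ∧ u₂ = 0. -/
open ExteriorAlgebra

lemma aux_iMulti_ne_zero {K V : Type*} [Field K] [AddCommGroup V] [Module K V]
    {n : ℕ} {v : Fin n → V} (h : LinearIndependent K v) :
    ExteriorAlgebra.ιMulti K n v ≠ 0 := by
  classical
  set W := Submodule.span K (Set.range v) with hW
  let B : Module.Basis (Fin n) K W := Module.Basis.span h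
  obtain ⟨p, hp⟩ := Submodule.exists_isCompl W
  let π : V →ₗ[K] W := Submodule.linearProjOfIsCompl W p hp
  let g : V →ₗ[K] (Fin n → K) := B.equivFun.toLinearMap ∘ₗ π
  let f : V [⋀^Fin n]→ₗ[K] K := Matrix.detRowAlternating.compLinearMap g
  have hgv : ∀ i, g (v i) = fun j => ((1 : Matrix (Fin n) (Fin n) K) i j) := by
    intro i
    have hmem : v i ∈ W := Submodule.subset_span ⟨i, rfl⟩
    have hπ : π (v i) = ⟨v i, hmem⟩ :=
      Submodule.linearProjOfIsCompl_apply_left hp ⟨v i, hmem⟩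
    have hB : B i = ⟨v i, hmem⟩ := Module.Basis.span_apply h i
    funext j
    simp only [g, LinearMap.comp_apply, hπ, ← hB, LinearEquiv.coe_coe,
      Module.Basis.equivFun_self, Matrix.one_apply]
  have hfv : f v = 1 := by
    have : f v = Matrix.det (Matrix.of fun i => g (v i)) := rfl
    rw [this]
    have : (Matrix.of fun i => g (v i)) = (1 : Matrix (Fin n) (Fin n) K) := by
      ext i j
      rw [Matrix.of_apply, hgv i]
    rw [this, Matrix.det_one]
  intro hzero
  have := congrArg
    (ExteriorAlgebra.liftAlternating
      (Function.update (fun i => (0 : V [⋀^Fin i]→ₗ[K] K)) n f)) hzero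
  rw [ExteriorAlgebra.liftAlternating_apply_ιMulti, map_zero, Function.update_self] at this
  rw [hfv] at this
  exact one_ne_zero this

/-- For 2-dimensional subspaces `L₁ = span {x₁, y₁}` and `L₂ = span {x₂, y₂}` of `V`,
one has `L₁ ∩ L₂ ≠ 0` if and only if `(x₁ ∧ y₁) ∧ (x₂ ∧ y₂) = 0` in the exterior
algebra of `V`. -/
theorem plucker_confluence
    (K V : Type*) [Field K] [AddCommGroup V] [Module K V] [FiniteDimensional K V]
    (hchar : (2 : K) ≠ 0)
    (L₁ L₂ : Submodule K V) (x₁ y₁ x₂ y₂ : V)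
    (hli₁ : LinearIndependent K ![x₁, y₁])
    (hL₁ : L₁ = Submodule.span K {x₁, y₁})
    (hli₂ : LinearIndependent K ![x₂, y₂])
    (hL₂ : L₂ = Submodule.span K {x₂, y₂}) :
    L₁ ⊓ L₂ ≠ ⊥ ↔ (ι K x₁ * ι K y₁) * (ι K x₂ * ι K y₂) = 0 := by
  have key : (ι K x₁ * ι K y₁) * (ι K x₂ * ι K y₂)
      = ExteriorAlgebra.ιMulti K 4 ![x₁, y₁, x₂, y₂] := by
    rw [ExteriorAlgebra.ιMulti_apply]
    simp [List.ofFn_succ, mul_assoc]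
  rw [key]
  have main : L₁ ⊓ L₂ ≠ ⊥ ↔ ¬ LinearIndependent K ![x₁, y₁, x₂, y₂] := by
    constructor
    · intro h
      obtain ⟨w, hw, hw0⟩ := Submodule.ne_bot_iff _ |>.mp h
      obtain ⟨hw1, hw2⟩ := Submodule.mem_inf.mp hw
      rw [hL₁] at hw1; rw [hL₂] at hw2
      obtain ⟨a, b, hab⟩ := Submodule.mem_span_pair.mp hw1
      obtain ⟨c, d, hcd⟩ := Submodule.mem_span_pair.mp hw2
      rw [Fintype.not_linearIndependent_iff]
      refine ⟨![a, b, -c, -d], ?_, ?_⟩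
      · simp only [Fin.sum_univ_four, Matrix.cons_val_zero, Matrix.cons_val_one,
          Matrix.head_cons, Matrix.cons_val_two, Matrix.tail_cons, Matrix.cons_val_three]
        linear_combination (norm := module) hab - hcd
      · by_contra hall
        push_neg at hall
        have ha := hall 0
        have hb := hall 1
        simp at ha hb
        rw [ha, hb] at hab
        simp at hab
        exact hw0 hab.symm
    · intro h
      obtain ⟨g, hsum, i, hi⟩ := Fintype.not_linearIndependent_iff.mp h
      have hsum' : g 0 • x₁ + g 1 • y₁ + (g 2 • x₂ + g 3 • y₂) = 0 := by
        have := hsum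
        simpa [Fin.sum_univ_four, add_assoc] using this
      set w := g 0 • x₁ + g 1 • y₁ with hwdef
      have hwL₁ : w ∈ L₁ := by
        rw [hL₁]; exact Submodule.mem_span_pair.mpr ⟨g 0, g 1, rfl⟩
      have hwL₂ : w ∈ L₂ := by
        rw [hL₂]
        have : w = (-(g 2)) • x₂ + (-(g 3)) • y₂ := by
          rw [neg_smul, neg_smul]; linear_combination (norm := module) hsum'
        rw [this]
        exact Submodule.mem_span_pair.mpr ⟨-(g 2), -(g 3), rfl⟩
      have hw0 : w ≠ 0 := by
        intro hw0
        have hw0' : g 0 • x₁ + g 1 • y₁ = 0 := hwdef.symm.trans hw0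
        have h1 : g 0 = 0 ∧ g 1 = 0 := by
          have := Fintype.linearIndependent_iff.mp hli₁ ![g 0, g 1]
            (by simpa [Fin.sum_univ_two] using hw0')
          exact ⟨by simpa using this 0, by simpa using this 1⟩
        have h2 : g 2 • x₂ + g 3 • y₂ = 0 := by
          rw [hw0] at hsum'
          simpa using hsum'
        have h3 : g 2 = 0 ∧ g 3 = 0 := by
          have := Fintype.linearIndependent_iff.mp hli₂ ![g 2, g 3]
            (by simpa [Fin.sum_univ_two] using h2)
          exact ⟨by simpa using this 0, by simpa using this 1⟩
        fin_cases i
        · exact hi h1.1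
        · exact hi h1.2
        · exact hi h3.1
        · exact hi h3.2
      exact Submodule.ne_bot_iff _ |>.mpr ⟨w, Submodule.mem_inf.mpr ⟨hwL₁, hwL₂⟩, hw0⟩
  rw [main]
  constructor
  · intro h
    exact AlternatingMap.map_linearDependent _ _ h
  · intro h hli
    exact aux_iMulti_ne_zero hli h
end

section
/- Let u be a nonzero element of the degree-2 part of the exterior algebra of V (i.e., u lies in the K-span of all elements x ∧ y with x, y ∈ V). Then u ∧ u = 0 if and only if there exist linearly independent vectors x, y ∈ V with u = x ∧ y. Consequently the Plücker image 𝒦 = {K(x ∧ y) | x, y ∈ V linearly independent} equals {Ku | u in the degree-2 part, u ≠ 0, u ∧ u = 0}. -/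
open ExteriorAlgebra Submodule Set FiniteDimensional

set_option linter.unusedSectionVars false
section aux
variable {K V : Type*} [Field K] [AddCommGroup V] [Module K V] [FiniteDimensional K V]

/-- span of products of two elements of a subspace -/
def Gens (K : Type*) {V : Type*} [Field K] [AddCommGroup V] [Module K V]
    (W : Submodule K V) : Submodule K (ExteriorAlgebra K V) :=
  Submodule.span K {z | ∃ x ∈ W, ∃ y ∈ W, z = ι K x * ι K y}

lemma Gens_mono {W W' : Submodule K V} (h : W ≤ W') : Gens K W ≤ Gens K W' := by
  apply Submodule.span_mono
  rintro z ⟨x, hx, y, hy, rfl⟩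
  exact ⟨x, h hx, y, h hy, rfl⟩

lemma ι_swap (x y : V) : ι K y * ι K x = -(ι K x * ι K y) :=
  eq_neg_of_add_eq_zero_left (by rw [add_comm]; exact ι_add_mul_swap x y)

lemma decomp (b₀ : V) (W : Submodule K V) (u : ExteriorAlgebra K V)
    (hu : u ∈ Gens K (Submodule.span K {b₀} ⊔ W)) :
    ∃ x ∈ W, ∃ r ∈ Gens K W, u = ι K b₀ * ι K x + r := by
  set F : V × ExteriorAlgebra K V →ₗ[K] ExteriorAlgebra K V :=
    LinearMap.coprod ((LinearMap.mulLeft K (ι K b₀)).comp (ι K)) LinearMap.id with hF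
  suffices h : u ∈ Submodule.map F (W.prod (Gens K W)) by
    obtain ⟨⟨x, r⟩, ⟨hx, hr⟩, hFu⟩ := h
    exact ⟨x, hx, r, hr, by simp [← hFu, hF]⟩
  refine Submodule.span_le.mpr ?_ hu
  rintro z ⟨x, hx, y, hy, rfl⟩
  rw [Submodule.mem_sup] at hx hy
  obtain ⟨a, ha, x', hx', rfl⟩ := hx
  obtain ⟨b, hb, y', hy', rfl⟩ := hy
  rw [Submodule.mem_span_singleton] at ha hb
  obtain ⟨α, rfl⟩ := ha
  obtain ⟨β, rfl⟩ := hb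
  refine ⟨(α • y' - β • x', ι K x' * ι K y'),
    ⟨sub_mem (smul_mem _ _ hy') (smul_mem _ _ hx'),
      Submodule.subset_span ⟨x', hx', y', hy', rfl⟩⟩, ?_⟩
  simp only [hF, LinearMap.coprod_apply, LinearMap.comp_apply, LinearMap.mulLeft_apply,
    LinearMap.id_apply, map_add, map_smul, map_sub]
  have h1 : ι K x' * ι K b₀ = -(ι K b₀ * ι K x') := ι_swap b₀ x'
  have h2 : ι K b₀ * ι K b₀ = 0 := ι_sq_zero b₀
  simp only [mul_add, add_mul, smul_mul_assoc, mul_smul_comm, sub_mul, mul_sub, h1, h2,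
    smul_zero, smul_neg, smul_smul]
  module

end aux

section aux2
variable {K V : Type*} [Field K] [AddCommGroup V] [Module K V] [FiniteDimensional K V]

lemma exists_compl_in (W₁ : Submodule K V) (x : V) (hx : x ∈ W₁) (hx0 : x ≠ 0) :
    ∃ W₂ : Submodule K V, W₂ ≤ W₁ ∧ x ∉ W₂ ∧ Submodule.span K {x} ⊔ W₂ = W₁ ∧
      Module.finrank K W₂ < Module.finrank K W₁ := by
  obtain ⟨U, hU⟩ := Submodule.exists_isCompl
    (Submodule.span K {(⟨x, hx⟩ : W₁)})
  set W₂ := U.map W₁.subtype with hW₂def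
  have hxW₂ : x ∉ W₂ := by
    rintro hmem
    rw [hW₂def, Submodule.mem_map] at hmem
    obtain ⟨y, hyU, hy⟩ := hmem
    have hy' : y = ⟨x, hx⟩ := Subtype.ext hy
    rw [hy'] at hyU
    have h2 : (⟨x, hx⟩ : W₁) ∈ Submodule.span K {(⟨x, hx⟩ : W₁)} ⊓ U :=
      ⟨Submodule.mem_span_singleton_self _, hyU⟩
    rw [hU.inf_eq_bot] at h2
    exact hx0 (by simpa using congrArg (W₁.subtype) h2)
  have hsup : Submodule.span K {x} ⊔ W₂ = W₁ := by
    have h3 := congrArg (Submodule.map W₁.subtype) hU.sup_eq_top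
    rw [Submodule.map_sup, Submodule.map_top, Submodule.range_subtype,
      Submodule.map_span] at h3
    simpa using h3
  have hinf : Submodule.span K {x} ⊓ W₂ = ⊥ := by
    rw [eq_bot_iff]
    rintro v hv
    obtain ⟨hv1, hv2⟩ := Submodule.mem_inf.mp hv
    rw [Submodule.mem_span_singleton] at hv1
    obtain ⟨γ, rfl⟩ := hv1
    rcases eq_or_ne γ 0 with rfl | hγ
    · simp
    · exact absurd (by simpa [smul_smul, inv_mul_cancel₀ hγ] using W₂.smul_mem γ⁻¹ hv2) hxW₂
  refine ⟨W₂, Submodule.map_subtype_le _ _, hxW₂, hsup, ?_⟩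
  have h4 := Submodule.finrank_sup_add_finrank_inf_eq (Submodule.span K {x}) W₂
  rw [hsup, hinf, finrank_span_singleton hx0] at h4
  simp only [finrank_bot, add_zero] at h4
  omega

end aux2

section aux3
variable {K V : Type*} [Field K] [AddCommGroup V] [Module K V] [FiniteDimensional K V]

lemma normal_form : ∀ (n : ℕ) (W : Submodule K V), Module.finrank K W ≤ n →
    ∀ u ∈ Gens K W, ∃ (m : ℕ) (c d : Fin m → V),
      LinearIndependent K (Sum.elim c d) ∧ (∀ i, c i ∈ W) ∧ (∀ i, d i ∈ W) ∧
      u = ∑ i, ι K (c i) * ι K (d i) := by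
  intro n
  induction n with
  | zero =>
    intro W hW u hu
    have hWbot : W = ⊥ := Submodule.finrank_eq_zero.mp (Nat.le_zero.mp hW)
    subst hWbot
    have hu0 : u = 0 := by
      have : Gens K (⊥ : Submodule K V) ≤ ⊥ := by
        refine Submodule.span_le.mpr ?_
        rintro z ⟨x, hx, y, hy, rfl⟩
        rw [Submodule.mem_bot] at hx
        subst hx
        simp
      simpa using this hu
    exact ⟨0, Fin.elim0, Fin.elim0, linearIndependent_empty_type,
      fun i => i.elim0, fun i => i.elim0, by simp [hu0]⟩
  | succ n IH =>
    intro W hW u hu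
    by_cases h0 : u = 0
    · exact ⟨0, Fin.elim0, Fin.elim0, linearIndependent_empty_type,
        fun i => i.elim0, fun i => i.elim0, by simp [h0]⟩
    rcases eq_or_ne W ⊥ with rfl | hWbot
    · exfalso
      apply h0
      have : Gens K (⊥ : Submodule K V) ≤ ⊥ := by
        refine Submodule.span_le.mpr ?_
        rintro z ⟨x, hx, y, hy, rfl⟩
        rw [Submodule.mem_bot] at hx
        subst hx
        simp
      simpa using this hu
    obtain ⟨b₀, hb₀W, hb₀⟩ := Submodule.ne_bot_iff W |>.mp hWbot
    obtain ⟨W₁, hW₁le, hb₀W₁, hsup₁, hrk₁⟩ := exists_compl_in W b₀ hb₀W hb₀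
    rw [← hsup₁] at hu
    obtain ⟨x, hxW₁, r, hr, hu_eq⟩ := decomp b₀ W₁ u hu
    by_cases hx0 : x = 0
    · subst hx0
      rw [map_zero, mul_zero, zero_add] at hu_eq
      obtain ⟨m, c, d, hLI, hc, hd, hsum⟩ := IH W₁ (by omega) r hr
      exact ⟨m, c, d, hLI, fun i => hW₁le (hc i), fun i => hW₁le (hd i),
        hu_eq.trans hsum⟩
    obtain ⟨W₂, hW₂le, hxW₂, hsup₂, hrk₂⟩ := exists_compl_in W₁ x hxW₁ hx0
    rw [← hsup₂] at hr
    obtain ⟨s, hsW₂, r', hr', hr_eq⟩ := decomp x W₂ r hr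
    obtain ⟨m, c, d, hLI, hc, hd, hsum⟩ := IH W₂ (by omega) r' hr'
    have hspanc : Submodule.span K (Set.range c) ≤ W₂ :=
      Submodule.span_le.mpr (Set.range_subset_iff.mpr hc)
    have hspand : Submodule.span K (Set.range d) ≤ W₂ :=
      Submodule.span_le.mpr (Set.range_subset_iff.mpr hd)
    obtain ⟨hLIc, hLId, hdisj⟩ := linearIndependent_sum.mp hLI
    simp only [Sum.elim_comp_inl, Sum.elim_comp_inr] at hLIc hLId hdisj
    refine ⟨m + 1, Fin.cons (b₀ - s) c, Fin.cons x d, ?_, ?_, ?_, ?_⟩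
    · rw [linearIndependent_sum]
      simp only [Sum.elim_comp_inl, Sum.elim_comp_inr]
      refine ⟨?_, ?_, ?_⟩
      · rw [linearIndependent_fin_cons]
        refine ⟨hLIc, fun hmem => hb₀W₁ ?_⟩
        have : b₀ - s ∈ W₁ := hW₂le (hspanc hmem)
        have hsW₁ : s ∈ W₁ := hW₂le hsW₂
        simpa using W₁.add_mem this hsW₁
      · rw [linearIndependent_fin_cons]
        exact ⟨hLId, fun hmem => hxW₂ (hspand hmem)⟩
      · rw [Submodule.disjoint_def]
        intro v hvC hvD
        rw [Fin.range_cons, Submodule.mem_span_insert] at hvC hvD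
        obtain ⟨α, p, hp, rfl⟩ := hvC
        obtain ⟨β, q, hq, hveq⟩ := hvD
        have hα : α = 0 := by
          by_contra hα
          apply hb₀W₁
          have hmem : α • b₀ ∈ W₁ := by
            have : α • b₀ = (β • x + q) + α • s - p := by
              rw [← hveq]; module
            rw [this]
            exact W₁.sub_mem (W₁.add_mem (W₁.add_mem (W₁.smul_mem β hxW₁)
              (hW₂le (hspand hq))) (W₁.smul_mem α (hW₂le hsW₂)))
              (hW₂le (hspanc hp))
          simpa [smul_smul, inv_mul_cancel₀ hα] using W₁.smul_mem α⁻¹ hmem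
        rw [hα, zero_smul, zero_add] at hveq ⊢
        have hβ : β = 0 := by
          by_contra hβ
          apply hxW₂
          have hmem : β • x ∈ W₂ := by
            have : β • x = p - q := by rw [hveq]; module
            rw [this]
            exact W₂.sub_mem (hspanc hp) (hspand hq)
          simpa [smul_smul, inv_mul_cancel₀ hβ] using W₂.smul_mem β⁻¹ hmem
        rw [hβ, zero_smul, zero_add] at hveq
        have : p ∈ Submodule.span K (Set.range c) ⊓ Submodule.span K (Set.range d) :=
          ⟨hp, hveq ▸ hq⟩
        rw [hdisj.eq_bot] at this
        simpa using this
    · intro i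
      refine Fin.cases ?_ ?_ i
      · rw [Fin.cons_zero]
        exact W.sub_mem hb₀W (hW₁le (hW₂le hsW₂))
      · intro j
        rw [Fin.cons_succ]
        exact hW₁le (hW₂le (hc j))
    · intro i
      refine Fin.cases ?_ ?_ i
      · rw [Fin.cons_zero]
        exact hW₁le hxW₁
      · intro j
        rw [Fin.cons_succ]
        exact hW₁le (hW₂le (hd j))
    · rw [Fin.sum_univ_succ]
      simp only [Fin.cons_zero, Fin.cons_succ]
      rw [hu_eq, hr_eq, ← hsum]
      have h1 : ι K x * ι K s = -(ι K s * ι K x) := ι_swap s x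
      rw [map_sub, sub_mul, h1]
      abel

end aux3

section aux4
variable {K V : Type*} [Field K] [AddCommGroup V] [Module K V] [FiniteDimensional K V]

lemma exists_functional {ι : Type*} [DecidableEq ι] (n : ℕ) (e : ι → V)
    (he : LinearIndependent K e) (jv : Fin n → ι) :
    ∃ φ : ExteriorAlgebra K V →ₗ[K] K, ∀ t : Fin n → ι,
      φ (ιMulti K n fun k => e (t k)) =
        Matrix.det (Matrix.of fun k l => if t k = jv l then (1:K) else 0) := by
  have hinj : Function.Injective e := he.injective
  have hset : LinearIndepOn K id (Set.range e) := (linearIndepOn_id_range_iff hinj).mpr he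
  set B := Module.Basis.extend hset with hB
  have hmem : ∀ i : ι, e i ∈ hset.extend (Set.subset_univ _) :=
    fun i => hset.subset_extend _ ⟨i, rfl⟩
  set emb : ι → hset.extend (Set.subset_univ _) := fun i => ⟨e i, hmem i⟩ with hemb
  have hrepr : ∀ (i i' : ι), B.repr (e i) (emb i') = if i = i' then 1 else 0 := by
    intro i i'
    have h1 : e i = B (emb i) := (Module.Basis.extend_apply_self hset (emb i)).symm
    by_cases h : i = i'
    · subst h
      rw [h1, B.repr_self]
      simp
    · have hne : emb i ≠ emb i' := fun hc => h (hinj (congrArg Subtype.val hc))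
      rw [h1, B.repr_self, Finsupp.single_eq_of_ne hne.symm]
      simp [h]
  refine ⟨liftAlternating (Function.update (fun _ => 0) n
      ((Matrix.detRowAlternating).compLinearMap (LinearMap.pi fun l => B.coord (emb (jv l))))), ?_⟩
  intro t
  rw [liftAlternating_apply_ιMulti, Function.update_self]
  have h2 : (fun k => (LinearMap.pi fun l => B.coord (emb (jv l))) (e (t k))) =
      Matrix.of fun k l => if t k = jv l then (1:K) else 0 := by
    funext k
    funext l
    simp [LinearMap.pi_apply, Module.Basis.coord_apply, hrepr]
  show Matrix.detRowAlternating (fun k => (LinearMap.pi fun l => B.coord (emb (jv l))) (e (t k))) = _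
  rw [h2]
  rfl

end aux4

section aux5
variable {K V : Type*} [Field K] [AddCommGroup V] [Module K V] [FiniteDimensional K V]

lemma iMulti_two (a b : V) : ιMulti K 2 ![a, b] = ι K a * ι K b := by
  rw [ιMulti_apply]
  simp [List.ofFn_succ]

lemma iMulti_four (a b c d : V) :
    ιMulti K 4 ![a, b, c, d] = ι K a * ι K b * ι K c * ι K d := by
  rw [ιMulti_apply]
  simp [List.ofFn_succ, mul_assoc]

lemma wedge_ne_zero {x y : V} (h : LinearIndependent K ![x, y]) :
    ι K x * ι K y ≠ 0 := by
  obtain ⟨φ, hφ⟩ := exists_functional 2 ![x, y] h id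
  intro hzero
  have h1 : φ (ιMulti K 2 fun k => ![x, y] (id k)) = 1 := by
    rw [hφ]
    have : (Matrix.of fun k l : Fin 2 => if id k = id l then (1:K) else 0) = 1 := by
      ext k l
      simp [Matrix.one_apply]
    rw [this, Matrix.det_one]
  rw [show (fun k => ![x, y] (id k)) = ![x, y] from rfl, iMulti_two, hzero, map_zero] at h1
  exact one_ne_zero h1.symm

lemma wedge_sq_zero (x y : V) :
    (ι K x * ι K y) * (ι K x * ι K y) = 0 := by
  have h1 : ι K y * ι K x = -(ι K x * ι K y) := ι_swap x y
  calc (ι K x * ι K y) * (ι K x * ι K y)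
      = ι K x * (ι K y * ι K x) * ι K y := by noncomm_ring
    _ = 0 := by rw [h1]; simp [ι_sq_zero, mul_assoc]

end aux5

section aux6
variable {K V : Type*} [Field K] [AddCommGroup V] [Module K V] [FiniteDimensional K V]

lemma sq_ne_zero (hchar : (2:K) ≠ 0) {m : ℕ} (hm : 2 ≤ m) (c d : Fin m → V)
    (hLI : LinearIndependent K (Sum.elim c d)) :
    (∑ i, ι K (c i) * ι K (d i)) * (∑ i, ι K (c i) * ι K (d i)) ≠ 0 := by
  set e : Fin m ⊕ Fin m → V := Sum.elim c d with he
  set i0 : Fin m := ⟨0, by omega⟩ with hi0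
  set i1 : Fin m := ⟨1, by omega⟩ with hi1
  have hi01 : i0 ≠ i1 := by simp [hi0, hi1, Fin.ext_iff]
  set jv : Fin 4 → Fin m ⊕ Fin m := ![.inl i0, .inr i0, .inl i1, .inr i1] with hjv
  obtain ⟨φ, hφ⟩ := exists_functional 4 e hLI jv
  intro hzero
  have hexp : (∑ i, ι K (c i) * ι K (d i)) * (∑ i, ι K (c i) * ι K (d i))
      = ∑ i : Fin m, ∑ j : Fin m,
          ιMulti K 4 fun k => e (![Sum.inl i, Sum.inr i, Sum.inl j, Sum.inr j] k) := by
    rw [Finset.sum_mul_sum]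
    refine Finset.sum_congr rfl fun i _ => Finset.sum_congr rfl fun j _ => ?_
    have hfun : (fun k => e (![Sum.inl i, Sum.inr i, Sum.inl j, Sum.inr j] k))
        = ![c i, d i, c j, d j] := by
      funext k
      fin_cases k <;> simp [he]
    rw [hfun, iMulti_four, mul_assoc, mul_assoc, mul_assoc]
  have hdet : ∀ i j : Fin m,
      Matrix.det (Matrix.of fun k l =>
        if ![Sum.inl i, Sum.inr i, Sum.inl j, Sum.inr j] k = jv l then (1:K) else 0)
      = (if i = i0 ∧ j = i1 then 1 else 0) + (if i = i1 ∧ j = i0 then 1 else 0) := by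
    intro i j
    by_cases hii0 : i = i0
    · subst hii0
      by_cases hji1 : j = i1
      · subst hji1
        have hone : (Matrix.of fun k l =>
            if ![Sum.inl i0, Sum.inr i0, Sum.inl i1, Sum.inr i1] k = jv l then (1:K) else 0)
            = (1 : Matrix (Fin 4) (Fin 4) K) := by
          ext k l
          fin_cases k <;> fin_cases l <;>
            simp [hjv, Matrix.one_apply, hi01, hi01.symm]
        rw [hone, Matrix.det_one]
        simp [hi01, hi01.symm]
      · by_cases hji0 : j = i0
        · subst hji0
          rw [Matrix.det_zero_of_row_eq (show (0 : Fin 4) ≠ 2 by decide)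
            (by funext l; simp; rfl)]
          simp [hji1, hi01]
        · rw [Matrix.det_eq_zero_of_row_eq_zero 2 (fun l => by
            fin_cases l <;> simp [hjv, hji0, hji1])]
          simp [hji0, hji1]
    · by_cases hii1 : i = i1
      · subst hii1
        by_cases hji0 : j = i0
        · subst hji0
          have hperm : (Matrix.of fun k l =>
              if ![Sum.inl i1, Sum.inr i1, Sum.inl i0, Sum.inr i0] k = jv l then (1:K) else 0)
              = !![0,0,1,0; 0,0,0,1; 1,0,0,0; 0,1,0,0] := by
            ext k l
            fin_cases k <;> fin_cases l <;>
              simp [hjv, hi01, hi01.symm, Matrix.vecHead, Matrix.vecTail]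
          rw [hperm]
          have hdet4 : Matrix.det
              (!![0,0,1,0; 0,0,0,1; 1,0,0,0; 0,1,0,0] : Matrix (Fin 4) (Fin 4) K) = 1 := by
            simp [Matrix.det_succ_row_zero, Fin.sum_univ_succ]
            simp [Fin.succAbove]
          rw [hdet4]
          simp [hii0, hi01.symm]
        · by_cases hji1 : j = i1
          · subst hji1
            rw [Matrix.det_zero_of_row_eq (show (0 : Fin 4) ≠ 2 by decide)
              (by funext l; simp; rfl)]
            simp [hji0, hi01.symm]
          · rw [Matrix.det_eq_zero_of_row_eq_zero 2 (fun l => by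
              fin_cases l <;> simp [hjv, hji0, hji1])]
            simp [hji0, hji1]
      · rw [Matrix.det_eq_zero_of_row_eq_zero 0 (fun l => by
          fin_cases l <;> simp [hjv, hii0, hii1])]
        simp [hii0, hii1]
  have hval : φ ((∑ i, ι K (c i) * ι K (d i)) * (∑ i, ι K (c i) * ι K (d i))) = 2 := by
    rw [hexp]
    rw [map_sum]
    simp_rw [map_sum, hφ, hdet]
    rw [Finset.sum_comm]
    simp [Finset.sum_add_distrib, ite_and, Finset.sum_ite_eq', Finset.sum_ite_eq]
    norm_num
  rw [hzero, map_zero] at hval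
  exact hchar hval.symm

end aux6

section main
variable {K V : Type*} [Field K] [AddCommGroup V] [Module K V] [FiniteDimensional K V]

lemma main_decomposable (hchar : (2 : K) ≠ 0) (u : ExteriorAlgebra K V)
    (hu : u ∈ Submodule.span K {z : ExteriorAlgebra K V | ∃ x y : V, z = ι K x * ι K y})
    (hu0 : u ≠ 0) (hsq : u * u = 0) :
    ∃ x y : V, LinearIndependent K ![x, y] ∧ u = ι K x * ι K y := by
  have hu' : u ∈ Gens K (⊤ : Submodule K V) := by
    refine Submodule.span_le.mpr ?_ hu
    rintro z ⟨x, y, rfl⟩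
    exact Submodule.subset_span ⟨x, trivial, y, trivial, rfl⟩
  obtain ⟨m, c, d, hLI, _, _, hsum⟩ :=
    normal_form (Module.finrank K (⊤ : Submodule K V)) ⊤ le_rfl u hu'
  rcases Nat.lt_or_ge m 2 with hm | hm
  · interval_cases m
    · exact absurd (by simpa using hsum) hu0
    · refine ⟨c 0, d 0, ?_, by simpa using hsum⟩
      have hinj : Function.Injective (![Sum.inl 0, Sum.inr 0] : Fin 2 → Fin 1 ⊕ Fin 1) := by
        intro a b hab
        fin_cases a <;> fin_cases b <;> simp_all
      have h2 := hLI.comp _ hinj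
      have heq : (Sum.elim c d ∘ (![Sum.inl 0, Sum.inr 0] : Fin 2 → Fin 1 ⊕ Fin 1))
          = ![c 0, d 0] := by
        funext k
        fin_cases k <;> rfl
      rwa [heq] at h2
  · exact absurd (hsum ▸ hsq) (sq_ne_zero hchar hm c d hLI)

end main


/-- A nonzero degree-2 element `u` of the exterior algebra satisfies `u ∧ u = 0` if and
only if it is decomposable, i.e. `u = x ∧ y` for linearly independent `x, y ∈ V`.
Consequently the Plücker image `𝒦` coincides with the set of spans of nonzero degree-2
elements `u` with `u ∧ u = 0`. -/
theorem plucker_image_characterization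
    (K V : Type*) [Field K] [AddCommGroup V] [Module K V] [FiniteDimensional K V]
    (hchar : (2 : K) ≠ 0) :
    (∀ u : ExteriorAlgebra K V,
        u ∈ Submodule.span K {z : ExteriorAlgebra K V | ∃ x y : V, z = ι K x * ι K y} →
        u ≠ 0 →
        (u * u = 0 ↔ ∃ x y : V, LinearIndependent K ![x, y] ∧ u = ι K x * ι K y)) ∧
    {W : Submodule K (ExteriorAlgebra K V) |
        ∃ x y : V, LinearIndependent K ![x, y] ∧ W = Submodule.span K {ι K x * ι K y}} =
      {W : Submodule K (ExteriorAlgebra K V) |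
        ∃ u : ExteriorAlgebra K V,
          u ∈ Submodule.span K {z : ExteriorAlgebra K V | ∃ x y : V, z = ι K x * ι K y} ∧
          u ≠ 0 ∧ u * u = 0 ∧ W = Submodule.span K {u}} := by
  have hmain : ∀ u : ExteriorAlgebra K V,
      u ∈ Submodule.span K {z : ExteriorAlgebra K V | ∃ x y : V, z = ι K x * ι K y} →
      u ≠ 0 →
      (u * u = 0 ↔ ∃ x y : V, LinearIndependent K ![x, y] ∧ u = ι K x * ι K y) := by
    intro u hu hu0
    constructor
    · exact fun hsq => main_decomposable hchar u hu hu0 hsq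
    · rintro ⟨x, y, _, rfl⟩
      exact wedge_sq_zero x y
  refine ⟨hmain, ?_⟩
  ext W
  constructor
  · rintro ⟨x, y, hxy, rfl⟩
    exact ⟨ι K x * ι K y, Submodule.subset_span ⟨x, y, rfl⟩, wedge_ne_zero hxy,
      wedge_sq_zero x y, rfl⟩
  · rintro ⟨u, hu, hu0, hsq, rfl⟩
    obtain ⟨x, y, hxy, rfl⟩ := main_decomposable hchar u hu hu0 hsq
    exact ⟨x, y, hxy, rfl⟩
end

section
/- Let h be a σ-hermitian form on V. Then there exists a unique map h₂ : ⋀²V × ⋀²V → K that is additive in each argument, K-linear in the first argument, σ-semilinear in the second argument (h₂(u, b•v) = σ(b)·h₂(u, v)), and satisfies h₂(x₁ ∧ x₂, y₁ ∧ y₂) = h(x₁,y₁)·h(x₂,y₂) − h(x₁,y₂)·h(x₂,y₁) for all x₁, x₂, y₁, y₂ ∈ V. Moreover this h₂ is σ-hermitian: h₂(u, v) = σ(h₂(v, u)) for all u, v ∈ ⋀²V. -/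
open ExteriorAlgebra

/-- The second exterior power of `V`, realized as the submodule of the exterior algebra
spanned by all products `ι x * ι y`. -/
def degTwo (K V : Type*) [Field K] [AddCommGroup V] [Module K V] :
    Submodule K (ExteriorAlgebra K V) :=
  Submodule.span K {z : ExteriorAlgebra K V | ∃ x y : V, z = ι K x * ι K y}

/-- The canonical alternating map `V × V → ⋀²V`, `(x, y) ↦ x ∧ y`. -/
def wedge (K V : Type*) [Field K] [AddCommGroup V] [Module K V] (x y : V) :
    degTwo K V :=
  ⟨ι K x * ι K y, Submodule.subset_span ⟨x, y, rfl⟩⟩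

section Aux
variable {K V : Type*} [Field K] [AddCommGroup V] [Module K V]

/-- Alternating map from an alternating bilinear function. -/
def altOfBilin (g : V → V → K)
    (h1 : ∀ x x' y, g (x + x') y = g x y + g x' y)
    (h2 : ∀ x y y', g x (y + y') = g x y + g x y')
    (hs1 : ∀ (a : K) x y, g (a • x) y = a * g x y)
    (hs2 : ∀ (b : K) x y, g x (b • y) = b * g x y)
    (halt : ∀ x, g x x = 0) : V [⋀^Fin 2]→ₗ[K] K where
  toFun v := g (v 0) (v 1)
  map_update_add' m i x y := by
    fin_cases i <;>
      simp [Function.update, h1, h2]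
  map_update_smul' m i c x := by
    fin_cases i <;>
      simp [Function.update, hs1, hs2, smul_eq_mul]
  map_eq_zero_of_eq' v i j hvij hij := by
    fin_cases i <;> fin_cases j <;> simp_all [halt]

@[simp] lemma altOfBilin_apply (g : V → V → K) (h1 h2 hs1 hs2 halt) (v : Fin 2 → V) :
    altOfBilin g h1 h2 hs1 hs2 halt v = g (v 0) (v 1) := rfl


/-- Extend a 2-alternating form to a linear functional on the exterior algebra. -/
noncomputable def lift2 (f : V [⋀^Fin 2]→ₗ[K] K) : ExteriorAlgebra K V →ₗ[K] K :=
  ExteriorAlgebra.liftAlternating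
    (Function.update (fun n => (0 : V [⋀^Fin n]→ₗ[K] K)) 2 f)

lemma ι_mul_ι_eq_ιMulti (x y : V) :
    ι K x * ι K y = ιMulti K 2 ![x, y] := by
  simp [ιMulti_apply, List.ofFn_succ]

@[simp] lemma lift2_wedge (f : V [⋀^Fin 2]→ₗ[K] K) (x y : V) :
    lift2 f (ι K x * ι K y) = f ![x, y] := by
  rw [ι_mul_ι_eq_ιMulti, lift2, liftAlternating_apply_ιMulti, Function.update_self]

lemma lift2_add (f f' : V [⋀^Fin 2]→ₗ[K] K) (z : ExteriorAlgebra K V) :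
    lift2 (f + f') z = lift2 f z + lift2 f' z := by
  have : Function.update (fun n => (0 : V [⋀^Fin n]→ₗ[K] K)) 2 (f + f') =
      Function.update (fun n => (0 : V [⋀^Fin n]→ₗ[K] K)) 2 f +
      Function.update (fun n => (0 : V [⋀^Fin n]→ₗ[K] K)) 2 f' := by
    funext i
    rcases eq_or_ne i 2 with rfl | hi
    · simp
    · simp [Function.update_of_ne hi]
  rw [lift2, this, map_add]
  rfl

lemma lift2_smul (c : K) (f : V [⋀^Fin 2]→ₗ[K] K) (z : ExteriorAlgebra K V) :
    lift2 (c • f) z = c * lift2 f z := by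
  have : Function.update (fun n => (0 : V [⋀^Fin n]→ₗ[K] K)) 2 (c • f) =
      c • Function.update (fun n => (0 : V [⋀^Fin n]→ₗ[K] K)) 2 f := by
    funext i
    rcases eq_or_ne i 2 with rfl | hi
    · simp
    · simp [Function.update_of_ne hi]
  rw [lift2, this, map_smul]
  rfl

lemma lift2_zero (z : ExteriorAlgebra K V) : lift2 (0 : V [⋀^Fin 2]→ₗ[K] K) z = 0 := by
  have : Function.update (fun n => (0 : V [⋀^Fin n]→ₗ[K] K)) 2 (0 : V [⋀^Fin 2]→ₗ[K] K) =
      fun n => (0 : V [⋀^Fin n]→ₗ[K] K) := by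
    funext i
    rcases eq_or_ne i 2 with rfl | hi
    · simp
    · simp [Function.update_of_ne hi]
  rw [lift2, this, show (fun n => (0 : V [⋀^Fin n]→ₗ[K] K)) = 0 from rfl, map_zero]
  rfl

end Aux

section Main
variable {K V : Type*} [Field K] [AddCommGroup V] [Module K V]

lemma h_smul_left (σ : K ≃+* K) (h : V → V → K)
    (hsmul : ∀ (a b : K) (x y : V), h (a • x) (b • y) = a * σ b * h x y)
    (a : K) (x y : V) : h (a • x) y = a * h x y := by
  have := hsmul a 1 x y
  simpa using this

lemma h_smul_right (σ : K ≃+* K) (h : V → V → K)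
    (hsmul : ∀ (a b : K) (x y : V), h (a • x) (b • y) = a * σ b * h x y)
    (b : K) (x y : V) : h x (b • y) = σ b * h x y := by
  have := hsmul 1 b x y
  simpa using this

/-- For fixed `x₁ x₂`, the alternating form `(y₁,y₂) ↦ σ(h x₁ y₁)σ(h x₂ y₂) - σ(h x₁ y₂)σ(h x₂ y₁)`. -/
def innerAlt (σ : K ≃+* K) (hσ : ∀ a, σ (σ a) = a) (h : V → V → K)
    (hadd₂ : ∀ x y y', h x (y + y') = h x y + h x y')
    (hsmul : ∀ (a b : K) (x y : V), h (a • x) (b • y) = a * σ b * h x y)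
    (x₁ x₂ : V) : V [⋀^Fin 2]→ₗ[K] K :=
  altOfBilin (fun y₁ y₂ => σ (h x₁ y₁) * σ (h x₂ y₂) - σ (h x₁ y₂) * σ (h x₂ y₁))
    (fun y y' w => by simp only [hadd₂, map_add]; ring)
    (fun y w w' => by simp only [hadd₂, map_add]; ring)
    (fun b y w => by
      simp only [h_smul_right σ h hsmul, map_mul, hσ]; ring)
    (fun b y w => by
      simp only [h_smul_right σ h hsmul, map_mul, hσ]; ring)
    (fun y => by ring)

lemma innerAlt_apply (σ : K ≃+* K) (hσ) (h : V → V → K) (hadd₂) (hsmul) (x₁ x₂ : V)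
    (v : Fin 2 → V) :
    innerAlt σ hσ h hadd₂ hsmul x₁ x₂ v =
      σ (h x₁ (v 0)) * σ (h x₂ (v 1)) - σ (h x₁ (v 1)) * σ (h x₂ (v 0)) := rfl

variable (σ : K ≃+* K) (hσ : ∀ a : K, σ (σ a) = a) (h : V → V → K)

lemma innerAlt_add_left (hadd₁ : ∀ x x' y, h (x + x') y = h x y + h x' y)
    (hadd₂ : ∀ x y y', h x (y + y') = h x y + h x y')
    (hsmul : ∀ (a b : K) (x y : V), h (a • x) (b • y) = a * σ b * h x y)
    (x₁ x₁' x₂ : V) :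
    innerAlt σ hσ h hadd₂ hsmul (x₁ + x₁') x₂ =
      innerAlt σ hσ h hadd₂ hsmul x₁ x₂ + innerAlt σ hσ h hadd₂ hsmul x₁' x₂ := by
  ext v
  simp only [innerAlt_apply, AlternatingMap.add_apply, hadd₁, map_add]
  ring

lemma innerAlt_add_right (hadd₁ : ∀ x x' y, h (x + x') y = h x y + h x' y)
    (hadd₂ : ∀ x y y', h x (y + y') = h x y + h x y')
    (hsmul : ∀ (a b : K) (x y : V), h (a • x) (b • y) = a * σ b * h x y)
    (x₁ x₂ x₂' : V) :
    innerAlt σ hσ h hadd₂ hsmul x₁ (x₂ + x₂') =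
      innerAlt σ hσ h hadd₂ hsmul x₁ x₂ + innerAlt σ hσ h hadd₂ hsmul x₁ x₂' := by
  ext v
  simp only [innerAlt_apply, AlternatingMap.add_apply, hadd₁, map_add]
  ring

lemma innerAlt_smul_left (hadd₂ : ∀ x y y', h x (y + y') = h x y + h x y')
    (hsmul : ∀ (a b : K) (x y : V), h (a • x) (b • y) = a * σ b * h x y)
    (a : K) (x₁ x₂ : V) :
    innerAlt σ hσ h hadd₂ hsmul (a • x₁) x₂ = σ a • innerAlt σ hσ h hadd₂ hsmul x₁ x₂ := by
  ext v
  simp only [innerAlt_apply, AlternatingMap.smul_apply, smul_eq_mul,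
    h_smul_left σ h hsmul, map_mul]
  ring

lemma innerAlt_smul_right (hadd₂ : ∀ x y y', h x (y + y') = h x y + h x y')
    (hsmul : ∀ (a b : K) (x y : V), h (a • x) (b • y) = a * σ b * h x y)
    (a : K) (x₁ x₂ : V) :
    innerAlt σ hσ h hadd₂ hsmul x₁ (a • x₂) = σ a • innerAlt σ hσ h hadd₂ hsmul x₁ x₂ := by
  ext v
  simp only [innerAlt_apply, AlternatingMap.smul_apply, smul_eq_mul,
    h_smul_left σ h hsmul, map_mul]
  ring

lemma innerAlt_self (hadd₂ : ∀ x y y', h x (y + y') = h x y + h x y')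
    (hsmul : ∀ (a b : K) (x y : V), h (a • x) (b • y) = a * σ b * h x y)
    (x : V) : innerAlt σ hσ h hadd₂ hsmul x x = 0 := by
  ext v
  simp only [innerAlt_apply, AlternatingMap.zero_apply]
  ring

/-- For fixed `v`, the alternating form `(x₁,x₂) ↦ σ (lift2 (innerAlt x₁ x₂) v)`. -/
noncomputable def outerAlt (hadd₁ : ∀ x x' y, h (x + x') y = h x y + h x' y)
    (hadd₂ : ∀ x y y', h x (y + y') = h x y + h x y')
    (hsmul : ∀ (a b : K) (x y : V), h (a • x) (b • y) = a * σ b * h x y)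
    (v : degTwo K V) : V [⋀^Fin 2]→ₗ[K] K :=
  altOfBilin (fun x₁ x₂ => σ (lift2 (innerAlt σ hσ h hadd₂ hsmul x₁ x₂) v.1))
    (fun x x' w => by
      rw [innerAlt_add_left σ hσ h hadd₁ hadd₂ hsmul, lift2_add, map_add])
    (fun x w w' => by
      rw [innerAlt_add_right σ hσ h hadd₁ hadd₂ hsmul, lift2_add, map_add])
    (fun a x w => by
      rw [innerAlt_smul_left σ hσ h hadd₂ hsmul, lift2_smul, map_mul, hσ])
    (fun a x w => by
      rw [innerAlt_smul_right σ hσ h hadd₂ hsmul, lift2_smul, map_mul, hσ])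
    (fun x => by
      rw [innerAlt_self σ hσ h hadd₂ hsmul, lift2_zero, map_zero])

/-- The hermitian form on the exterior square induced by `h`. -/
noncomputable def herm2 (hadd₁ : ∀ x x' y, h (x + x') y = h x y + h x' y)
    (hadd₂ : ∀ x y y', h x (y + y') = h x y + h x y')
    (hsmul : ∀ (a b : K) (x y : V), h (a • x) (b • y) = a * σ b * h x y)
    (u v : degTwo K V) : K :=
  lift2 (outerAlt σ hσ h hadd₁ hadd₂ hsmul v) u.1

variable (hadd₁ : ∀ x x' y, h (x + x') y = h x y + h x' y)
    (hadd₂ : ∀ x y y', h x (y + y') = h x y + h x y')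
    (hsmul : ∀ (a b : K) (x y : V), h (a • x) (b • y) = a * σ b * h x y)

lemma herm2_add_left (u u' v : degTwo K V) :
    herm2 σ hσ h hadd₁ hadd₂ hsmul (u + u') v =
      herm2 σ hσ h hadd₁ hadd₂ hsmul u v + herm2 σ hσ h hadd₁ hadd₂ hsmul u' v := by
  unfold herm2
  rw [Submodule.coe_add, map_add]

lemma herm2_smul_left (a : K) (u v : degTwo K V) :
    herm2 σ hσ h hadd₁ hadd₂ hsmul (a • u) v = a * herm2 σ hσ h hadd₁ hadd₂ hsmul u v := by
  unfold herm2
  rw [Submodule.coe_smul, map_smul, smul_eq_mul]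

lemma outerAlt_add (v v' : degTwo K V) :
    outerAlt σ hσ h hadd₁ hadd₂ hsmul (v + v') =
      outerAlt σ hσ h hadd₁ hadd₂ hsmul v + outerAlt σ hσ h hadd₁ hadd₂ hsmul v' := by
  ext w
  show σ (lift2 _ ((v + v') : degTwo K V).1) = _
  rw [Submodule.coe_add, map_add, map_add]
  rfl

lemma outerAlt_smul (b : K) (v : degTwo K V) :
    outerAlt σ hσ h hadd₁ hadd₂ hsmul (b • v) = σ b • outerAlt σ hσ h hadd₁ hadd₂ hsmul v := by
  ext w
  show σ (lift2 _ ((b • v) : degTwo K V).1) = _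
  rw [Submodule.coe_smul, map_smul, smul_eq_mul, map_mul]
  rfl

lemma herm2_add_right (u v v' : degTwo K V) :
    herm2 σ hσ h hadd₁ hadd₂ hsmul u (v + v') =
      herm2 σ hσ h hadd₁ hadd₂ hsmul u v + herm2 σ hσ h hadd₁ hadd₂ hsmul u v' := by
  unfold herm2
  rw [outerAlt_add, lift2_add]

lemma herm2_smul_right (b : K) (u v : degTwo K V) :
    herm2 σ hσ h hadd₁ hadd₂ hsmul u (b • v) = σ b * herm2 σ hσ h hadd₁ hadd₂ hsmul u v := by
  unfold herm2
  rw [outerAlt_smul, lift2_smul]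

lemma herm2_wedge (x₁ x₂ y₁ y₂ : V) :
    herm2 σ hσ h hadd₁ hadd₂ hsmul (wedge K V x₁ x₂) (wedge K V y₁ y₂) =
      h x₁ y₁ * h x₂ y₂ - h x₁ y₂ * h x₂ y₁ := by
  unfold herm2
  show lift2 _ (ι K x₁ * ι K x₂) = _
  rw [lift2_wedge]
  show σ (lift2 (innerAlt σ hσ h hadd₂ hsmul (![x₁, x₂] 0) (![x₁, x₂] 1))
    (ι K y₁ * ι K y₂)) = _
  rw [lift2_wedge]
  simp only [Matrix.cons_val_zero, Matrix.cons_val_one, Matrix.head_cons, innerAlt_apply,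
    map_sub, map_mul, hσ]

lemma zero_left_of_add (g : degTwo K V → degTwo K V → K)
    (a1 : ∀ u u' v, g (u + u') v = g u v + g u' v) (v : degTwo K V) : g 0 v = 0 := by
  have h0 : g (0 + 0 : degTwo K V) v = g 0 v + g 0 v := a1 0 0 v
  rw [add_zero] at h0
  exact (left_eq_add.mp h0)

lemma zero_right_of_add (g : degTwo K V → degTwo K V → K)
    (a2 : ∀ u v v', g u (v + v') = g u v + g u v') (u : degTwo K V) : g u 0 = 0 := by
  have h0 : g u (0 + 0 : degTwo K V) = g u 0 + g u 0 := a2 u 0 0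
  rw [add_zero] at h0
  exact (left_eq_add.mp h0)

lemma herm_ext (g g' : degTwo K V → degTwo K V → K)
    (a1 : ∀ u u' v, g (u + u') v = g u v + g u' v)
    (a2 : ∀ u v v', g u (v + v') = g u v + g u v')
    (a3 : ∀ (a : K) (u v : degTwo K V), g (a • u) v = a * g u v)
    (a4 : ∀ (b : K) (u v : degTwo K V), g u (b • v) = σ b * g u v)
    (b1 : ∀ u u' v, g' (u + u') v = g' u v + g' u' v)
    (b2 : ∀ u v v', g' u (v + v') = g' u v + g' u v')
    (b3 : ∀ (a : K) (u v : degTwo K V), g' (a • u) v = a * g' u v)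
    (b4 : ∀ (b : K) (u v : degTwo K V), g' u (b • v) = σ b * g' u v)
    (hw : ∀ x₁ x₂ y₁ y₂ : V, g (wedge K V x₁ x₂) (wedge K V y₁ y₂) =
      g' (wedge K V x₁ x₂) (wedge K V y₁ y₂)) :
    ∀ u v, g u v = g' u v := by
  rintro ⟨zu, hu⟩ ⟨zv, hv⟩
  induction hu, hv using Submodule.span_induction₂ with
  | mem_mem z w hz hw' =>
    obtain ⟨x₁, x₂, rfl⟩ := hz
    obtain ⟨y₁, y₂, rfl⟩ := hw'
    exact hw x₁ x₂ y₁ y₂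
  | zero_left w hw' => rw [show (⟨0, _⟩ : degTwo K V) = 0 from rfl,
      zero_left_of_add g a1, zero_left_of_add g' b1]
  | zero_right z hz => rw [show (⟨0, _⟩ : degTwo K V) = 0 from rfl,
      zero_right_of_add g a2, zero_right_of_add g' b2]
  | add_left x y z hx hy hz ih1 ih2 =>
    rw [show (⟨x + y, _⟩ : degTwo K V) = ⟨x, hx⟩ + ⟨y, hy⟩ from rfl, a1, b1, ih1, ih2]
  | add_right x y z hx hy hz ih1 ih2 =>
    rw [show (⟨y + z, _⟩ : degTwo K V) = ⟨y, hy⟩ + ⟨z, hz⟩ from rfl, a2, b2, ih1, ih2]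
  | smul_left r x y hx hy ih =>
    rw [show (⟨r • x, _⟩ : degTwo K V) = r • ⟨x, hx⟩ from rfl, a3, b3, ih]
  | smul_right r x y hx hy ih =>
    rw [show (⟨r • y, _⟩ : degTwo K V) = r • ⟨y, hy⟩ from rfl, a4, b4, ih]

lemma herm_symm (hσ' : ∀ a : K, σ (σ a) = a) (g : degTwo K V → degTwo K V → K)
    (a1 : ∀ u u' v, g (u + u') v = g u v + g u' v)
    (a2 : ∀ u v v', g u (v + v') = g u v + g u v')
    (a3 : ∀ (a : K) (u v : degTwo K V), g (a • u) v = a * g u v)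
    (a4 : ∀ (b : K) (u v : degTwo K V), g u (b • v) = σ b * g u v)
    (hw : ∀ x₁ x₂ y₁ y₂ : V, g (wedge K V x₁ x₂) (wedge K V y₁ y₂) =
      σ (g (wedge K V y₁ y₂) (wedge K V x₁ x₂))) :
    ∀ u v, g u v = σ (g v u) := by
  rintro ⟨zu, hu⟩ ⟨zv, hv⟩
  induction hu, hv using Submodule.span_induction₂ with
  | mem_mem z w hz hw' =>
    obtain ⟨x₁, x₂, rfl⟩ := hz
    obtain ⟨y₁, y₂, rfl⟩ := hw'
    exact hw x₁ x₂ y₁ y₂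
  | zero_left w hw' => rw [show (⟨0, _⟩ : degTwo K V) = 0 from rfl,
      zero_left_of_add g a1, zero_right_of_add g a2, map_zero]
  | zero_right z hz => rw [show (⟨0, _⟩ : degTwo K V) = 0 from rfl,
      zero_left_of_add g a1, zero_right_of_add g a2, map_zero]
  | add_left x y z hx hy hz ih1 ih2 =>
    rw [show (⟨x + y, _⟩ : degTwo K V) = ⟨x, hx⟩ + ⟨y, hy⟩ from rfl, a1, a2, map_add, ih1, ih2]
  | add_right x y z hx hy hz ih1 ih2 =>
    rw [show (⟨y + z, _⟩ : degTwo K V) = ⟨y, hy⟩ + ⟨z, hz⟩ from rfl, a1, a2, map_add, ih1, ih2]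
  | smul_left r x y hx hy ih =>
    rw [show (⟨r • x, _⟩ : degTwo K V) = r • ⟨x, hx⟩ from rfl, a3, a4, map_mul, hσ', ih]
  | smul_right r x y hx hy ih =>
    rw [show (⟨r • y, _⟩ : degTwo K V) = r • ⟨y, hy⟩ from rfl, a3, a4, map_mul, ih]

end Main

/-- Given a σ-hermitian form `h` on `V`, there is a unique map
`h₂ : ⋀²V × ⋀²V → K` which is additive in each argument, `K`-linear in the first,
σ-semilinear in the second, and satisfies
`h₂(x₁ ∧ x₂, y₁ ∧ y₂) = h(x₁,y₁)h(x₂,y₂) − h(x₁,y₂)h(x₂,y₁)`.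
Moreover this `h₂` is again σ-hermitian. -/
theorem exists_unique_hermitian_form_on_exterior_square
    (K V : Type*) [Field K] [AddCommGroup V] [Module K V] [FiniteDimensional K V]
    (hchar : (2 : K) ≠ 0)
    (σ : K ≃+* K) (hσ : ∀ a, σ (σ a) = a)
    (h : V → V → K)
    (hadd₁ : ∀ x x' y, h (x + x') y = h x y + h x' y)
    (hadd₂ : ∀ x y y', h x (y + y') = h x y + h x y')
    (hsmul : ∀ (a b : K) (x y : V), h (a • x) (b • y) = a * σ b * h x y)
    (hherm : ∀ x y, h x y = σ (h y x)) :
    (∃! h₂ : degTwo K V → degTwo K V → K,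
      (∀ u u' v, h₂ (u + u') v = h₂ u v + h₂ u' v) ∧
      (∀ u v v', h₂ u (v + v') = h₂ u v + h₂ u v') ∧
      (∀ (a : K) (u v : degTwo K V), h₂ (a • u) v = a * h₂ u v) ∧
      (∀ (b : K) (u v : degTwo K V), h₂ u (b • v) = σ b * h₂ u v) ∧
      (∀ x₁ x₂ y₁ y₂ : V, h₂ (wedge K V x₁ x₂) (wedge K V y₁ y₂) =
        h x₁ y₁ * h x₂ y₂ - h x₁ y₂ * h x₂ y₁)) ∧
    (∀ h₂ : degTwo K V → degTwo K V → K,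
      (∀ u u' v, h₂ (u + u') v = h₂ u v + h₂ u' v) →
      (∀ u v v', h₂ u (v + v') = h₂ u v + h₂ u v') →
      (∀ (a : K) (u v : degTwo K V), h₂ (a • u) v = a * h₂ u v) →
      (∀ (b : K) (u v : degTwo K V), h₂ u (b • v) = σ b * h₂ u v) →
      (∀ x₁ x₂ y₁ y₂ : V, h₂ (wedge K V x₁ x₂) (wedge K V y₁ y₂) =
        h x₁ y₁ * h x₂ y₂ - h x₁ y₂ * h x₂ y₁) →
      ∀ u v, h₂ u v = σ (h₂ v u)) := by

  constructor
  · refine ⟨herm2 σ hσ h hadd₁ hadd₂ hsmul,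
      ⟨herm2_add_left σ hσ h hadd₁ hadd₂ hsmul,
       herm2_add_right σ hσ h hadd₁ hadd₂ hsmul,
       herm2_smul_left σ hσ h hadd₁ hadd₂ hsmul,
       herm2_smul_right σ hσ h hadd₁ hadd₂ hsmul,
       herm2_wedge σ hσ h hadd₁ hadd₂ hsmul⟩, ?_⟩
    rintro g ⟨b1, b2, b3, b4, b5⟩
    funext u v
    exact herm_ext σ g (herm2 σ hσ h hadd₁ hadd₂ hsmul) b1 b2 b3 b4
      (herm2_add_left σ hσ h hadd₁ hadd₂ hsmul)
      (herm2_add_right σ hσ h hadd₁ hadd₂ hsmul)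
      (herm2_smul_left σ hσ h hadd₁ hadd₂ hsmul)
      (herm2_smul_right σ hσ h hadd₁ hadd₂ hsmul)
      (fun x₁ x₂ y₁ y₂ => by
        rw [b5, herm2_wedge σ hσ h hadd₁ hadd₂ hsmul]) u v
  · intro g b1 b2 b3 b4 b5 u v
    refine herm_symm σ hσ g b1 b2 b3 b4 ?_ u v
    intro x₁ x₂ y₁ y₂
    rw [b5, b5, map_sub, map_mul, map_mul, ← hherm, ← hherm, ← hherm, ← hherm]
    ring
end

section
/- Let h be a nondegenerate σ-hermitian form on the finite-dimensional K-vector space V, and let h₂ be a map ⋀²V × ⋀²V → K that is additive in each argument, K-linear in the first argument, σ-semilinear in the second, and satisfies h₂(x₁ ∧ x₂, y₁ ∧ y₂) = h(x₁,y₁)·h(x₂,y₂) − h(x₁,y₂)·h(x₂,y₁) for all x₁, x₂, y₁, y₂ ∈ V. Then h₂ is nondegenerate on ⋀²V: if h₂(u, v) = 0 for all v ∈ ⋀²V, then u = 0. -/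
open ExteriorAlgebra

/-- If `h` is a nondegenerate σ-hermitian form on `V`, then the induced form `h₂`
on `⋀²V` is nondegenerate. -/
theorem induced_form_on_exterior_square_nondegenerate
    (K V : Type*) [Field K] [AddCommGroup V] [Module K V] [FiniteDimensional K V]
    (hchar : (2 : K) ≠ 0)
    (σ : K ≃+* K) (hσ : ∀ a, σ (σ a) = a)
    (h : V → V → K)
    (hadd₁ : ∀ x x' y, h (x + x') y = h x y + h x' y)
    (hadd₂ : ∀ x y y', h x (y + y') = h x y + h x y')
    (hsmul : ∀ (a b : K) (x y : V), h (a • x) (b • y) = a * σ b * h x y)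
    (hherm : ∀ x y, h x y = σ (h y x))
    (hnondeg : ∀ x, (∀ y, h x y = 0) → x = 0)
    (h₂ : degTwo K V → degTwo K V → K)
    (h₂add₁ : ∀ u u' v, h₂ (u + u') v = h₂ u v + h₂ u' v)
    (h₂add₂ : ∀ u v v', h₂ u (v + v') = h₂ u v + h₂ u v')
    (h₂smul₁ : ∀ (a : K) (u v : degTwo K V), h₂ (a • u) v = a * h₂ u v)
    (h₂smul₂ : ∀ (b : K) (u v : degTwo K V), h₂ u (b • v) = σ b * h₂ u v)
    (h₂wedge : ∀ x₁ x₂ y₁ y₂ : V, h₂ (wedge K V x₁ x₂) (wedge K V y₁ y₂) =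
      h x₁ y₁ * h x₂ y₂ - h x₁ y₂ * h x₂ y₁) :
    ∀ u : degTwo K V, (∀ v : degTwo K V, h₂ u v = 0) → u = 0 := by
  intro u hu
  -- basic consequences of the axioms for h
  have hsmul₁ : ∀ (a : K) (x y : V), h (a • x) y = a * h x y := by
    intro a x y
    have := hsmul a 1 x y
    simpa using this
  have hsmul₂ : ∀ (b : K) (x y : V), h x (b • y) = σ b * h x y := by
    intro b x y
    have := hsmul 1 b x y
    simpa using this
  have hzero₂ : ∀ x : V, h x 0 = 0 := by
    intro x
    have := hsmul₂ 0 x 0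
    simpa using this
  -- the semilinear map y ↦ h(·, y), as a set of functionals
  let Φ : V → Module.Dual K V := fun y =>
    { toFun := fun x => h x y
      map_add' := fun x x' => hadd₁ x x' y
      map_smul' := fun a x => by simp [hsmul₁] }
  let W : Submodule K (Module.Dual K V) :=
    { carrier := Set.range Φ
      add_mem' := by
        rintro _ _ ⟨y, rfl⟩ ⟨y', rfl⟩
        exact ⟨y + y', by ext x; exact hadd₂ x y y'⟩
      zero_mem' := ⟨0, by ext x; exact hzero₂ x⟩
      smul_mem' := by
        rintro a _ ⟨y, rfl⟩
        refine ⟨σ a • y, ?_⟩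
        ext x
        simp [Φ, hsmul₂, hσ] }
  have hW : W = ⊤ := by
    have hco : W.dualCoannihilator = ⊥ := by
      rw [Submodule.eq_bot_iff]
      intro v hv
      refine hnondeg v fun y => ?_
      exact (Submodule.mem_dualCoannihilator v).1 hv (Φ y) ⟨y, rfl⟩
    have := (Subspace.dualCoannihilator_dualAnnihilator_eq (W := W)).symm
    rw [this, hco, Submodule.dualAnnihilator_bot]
  have hsurj : ∀ φ : Module.Dual K V, ∃ y : V, Φ y = φ := by
    intro φ
    have : φ ∈ W := hW ▸ Submodule.mem_top
    exact this
  -- dual family to a basis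
  set n := Module.finrank K V with hn
  let b := Module.finBasis K V
  choose f hf using fun i => hsurj (b.coord i)
  have hbf : ∀ i j : Fin n, h (b j) (f i) = if i = j then 1 else 0 := by
    intro i j
    have : Φ (f i) (b j) = b.coord i (b j) := by rw [hf i]
    simpa [Φ, Module.Basis.coord_apply, Module.Basis.repr_self, Finsupp.single_apply, eq_comm] using this
  -- wedge is alternating / bilinear
  have wskew : ∀ x y : V, wedge K V y x = - wedge K V x y := by
    intro x y
    apply Subtype.ext
    have h0 : (ι K (x + y) * ι K (x + y) : ExteriorAlgebra K V) = 0 := ι_sq_zero _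
    rw [map_add, add_mul, mul_add, mul_add, ι_sq_zero, ι_sq_zero, zero_add, add_zero] at h0
    have : (ι K y * ι K x : ExteriorAlgebra K V) = -(ι K x * ι K y) :=
      eq_neg_of_add_eq_zero_right h0
    simpa [wedge] using this
  -- the wedges of basis vectors span degTwo
  let g : Fin n × Fin n → degTwo K V := fun p => wedge K V (b p.1) (b p.2)
  have key : ∀ x y : V, (ι K x * ι K y : ExteriorAlgebra K V) ∈
      Submodule.span K (Set.range fun p : Fin n × Fin n =>
        (ι K (b p.1) * ι K (b p.2) : ExteriorAlgebra K V)) := by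
    intro x y
    have hx : (ι K x : ExteriorAlgebra K V) = ∑ i, b.repr x i • ι K (b i) := by
      conv_lhs => rw [← b.sum_repr x]
      rw [map_sum]
      simp
    have hy : (ι K y : ExteriorAlgebra K V) = ∑ j, b.repr y j • ι K (b j) := by
      conv_lhs => rw [← b.sum_repr y]
      rw [map_sum]
      simp
    rw [hx, hy, Finset.sum_mul_sum]
    refine Submodule.sum_mem _ fun i _ => Submodule.sum_mem _ fun j _ => ?_
    rw [smul_mul_smul_comm]
    exact Submodule.smul_mem _ _ (Submodule.subset_span ⟨(i, j), rfl⟩)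
  have humem : u ∈ Submodule.span K (Set.range g) := by
    have hmap : degTwo K V ≤ Submodule.map (degTwo K V).subtype
        (Submodule.span K (Set.range g)) := by
      rw [Submodule.map_span]
      refine Submodule.span_le.2 ?_
      rintro z ⟨x, y, rfl⟩
      have : ((degTwo K V).subtype '' Set.range g) =
          Set.range fun p : Fin n × Fin n =>
            (ι K (b p.1) * ι K (b p.2) : ExteriorAlgebra K V) := by
        rw [← Set.range_comp]
        rfl
      rw [this]
      exact key x y
    obtain ⟨t, htT, hte⟩ := hmap u.2
    have : t = u := Subtype.ext hte
    exact this ▸ htT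
  obtain ⟨a, ha⟩ := (Submodule.mem_span_range_iff_exists_fun K).1 humem
  -- pairing computation: the coefficients are symmetric
  have hsum : ∀ v : degTwo K V, h₂ u v = ∑ p : Fin n × Fin n, a p * h₂ (g p) v := by
    intro v
    let L : degTwo K V →ₗ[K] K :=
      { toFun := fun w => h₂ w v
        map_add' := fun w w' => h₂add₁ w w' v
        map_smul' := fun c w => h₂smul₁ c w v }
    have : h₂ u v = L u := rfl
    rw [this, ← ha, map_sum]
    simp [L, smul_eq_mul]
  have hgram : ∀ (p : Fin n × Fin n) (k l : Fin n),
      h₂ (g p) (wedge K V (f k) (f l)) =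
        (if k = p.1 then 1 else 0) * (if l = p.2 then 1 else 0) -
          (if l = p.1 then 1 else 0) * (if k = p.2 then 1 else 0) := by
    intro p k l
    rw [h₂wedge, hbf, hbf, hbf, hbf]
  have hsymm : ∀ k l : Fin n, a (k, l) = a (l, k) := by
    intro k l
    have h0 := hu (wedge K V (f k) (f l))
    rw [hsum] at h0
    have : ∑ p : Fin n × Fin n, a p * h₂ (g p) (wedge K V (f k) (f l)) =
        a (k, l) - a (l, k) := by
      rw [Fintype.sum_prod_type]
      simp only [hgram, mul_sub, mul_ite, ite_mul, mul_one, mul_zero, one_mul, zero_mul]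
      simp [Finset.sum_sub_distrib, Finset.sum_ite_eq]
    rw [this] at h0
    exact sub_eq_zero.mp h0
  -- conclude u = 0
  have huneg : u = -u := by
    have h1 : u = ∑ p : Fin n × Fin n, a p • g p := ha.symm
    have h2 : ∑ p : Fin n × Fin n, a p • g p =
        ∑ p : Fin n × Fin n, a (p.2, p.1) • g (p.2, p.1) := by
      exact Fintype.sum_equiv (Equiv.prodComm (Fin n) (Fin n)) _ _ (fun p => by
        simp [Equiv.prodComm])
    have h3 : ∀ p : Fin n × Fin n, a (p.2, p.1) • g (p.2, p.1) = -(a p • g p) := by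
      intro p
      have : g (p.2, p.1) = -g p := wskew (b p.1) (b p.2)
      rw [this, hsymm p.2 p.1, smul_neg]
    calc u = ∑ p : Fin n × Fin n, a p • g p := h1
      _ = ∑ p : Fin n × Fin n, a (p.2, p.1) • g (p.2, p.1) := h2
      _ = ∑ p : Fin n × Fin n, -(a p • g p) := by simp only [h3]
      _ = -∑ p : Fin n × Fin n, a p • g p := by rw [Finset.sum_neg_distrib]
      _ = -u := by rw [← h1]
  have h2u : (2 : K) • u = 0 := by
    rw [two_smul]
    nth_rewrite 1 [huneg]
    simp
  rcases smul_eq_zero.1 h2u with hc | hu0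
  · exact absurd hc hchar
  · exact hu0
end

section
/- Let h be a nondegenerate σ-hermitian form on V with dim V ≥ 5, and let x₁, x₂ ∈ V be linearly independent. Then the subspace span_K{x₁, x₂} is totally isotropic (with respect to h) if and only if for all linearly independent y₁, y₂ ∈ V with x₁ ∧ x₂ ∧ y₁ ∧ y₂ = 0 in the exterior algebra of V one has h(x₁,y₁)·h(x₂,y₂) − h(x₁,y₂)·h(x₂,y₁) = 0. (In the language of the Plücker embedding: Ku ∈ 𝒦 is strongly isotropic if and only if h₂(u, v) = 0 for every Kv ∈ 𝒦 with u ∧ v = 0.) -/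
open ExteriorAlgebra

private lemma wedge_ne_zero_s7 {K V : Type*} [Field K] [AddCommGroup V] [Module K V]
    (v : Fin 4 → V) (hv : LinearIndependent K v) :
    ι K (v 0) * ι K (v 1) * ι K (v 2) * ι K (v 3) ≠ 0 := by
  classical
  set W := Submodule.span K (Set.range v) with hW
  let B : Module.Basis (Fin 4) K W := Module.Basis.span hv
  obtain ⟨W', hc⟩ := Submodule.exists_isCompl W
  let π : V →ₗ[K] W := W.linearProjOfIsCompl W' hc
  let g : Fin 4 → (V →ₗ[K] K) := fun i => (B.coord i).comp π
  have hg : ∀ i j, g j (v i) = if i = j then 1 else 0 := by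
    intro i j
    have hvW : v i ∈ W := Submodule.subset_span (Set.mem_range_self i)
    have hπ : π (v i) = ⟨v i, hvW⟩ :=
      Submodule.linearProjOfIsCompl_apply_left hc ⟨v i, hvW⟩
    have hB : B i = ⟨v i, hvW⟩ := Module.Basis.span_apply hv i
    have : g j (v i) = B.coord j (B i) := by
      simp only [g, LinearMap.comp_apply, hπ, hB]
    rw [this, Module.Basis.coord_apply, Module.Basis.repr_self, Finsupp.single_apply]
  let f : V [⋀^Fin 4]→ₗ[K] K :=
    (Matrix.detRowAlternating).compLinearMap (LinearMap.pi g)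
  have hfv : f v = 1 := by
    have hM : (fun i => (LinearMap.pi g) (v i)) = (1 : Matrix (Fin 4) (Fin 4) K) := by
      funext i j
      simp [LinearMap.pi_apply, hg i j, Matrix.one_apply]
    show Matrix.detRowAlternating (fun i => (LinearMap.pi g) (v i)) = 1
    rw [hM]
    exact Matrix.det_one
  intro hzero
  have h2 : ιMulti K 4 v = ι K (v 0) * ι K (v 1) * ι K (v 2) * ι K (v 3) := by
    have h3 : Fin.succ 2 = (3 : Fin 4) := rfl
    simp [ιMulti_apply, List.ofFn_succ, mul_assoc, Matrix.vecTail, Function.comp, h3]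
  have h1 : liftAlternating (R := K) (M := V) (N := K)
      (Function.update (0 : ∀ i, V [⋀^Fin i]→ₗ[K] K) 4 f) (ιMulti K 4 v) = f v := by
    rw [liftAlternating_apply_ιMulti]
    simp
  rw [h2, hzero, map_zero, hfv] at h1
  exact one_ne_zero h1.symm

/-- Strong isotropy in terms of the Plücker embedding: for a nondegenerate σ-hermitian
form `h` on `V` with `dim V ≥ 5` and linearly independent `x₁, x₂`, the plane
`span {x₁, x₂}` is totally isotropic if and only if for all linearly independent
`y₁, y₂` with `x₁ ∧ x₂ ∧ y₁ ∧ y₂ = 0` one has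
`h(x₁,y₁)h(x₂,y₂) − h(x₁,y₂)h(x₂,y₁) = 0`. -/
theorem strongly_isotropic_iff
    (K V : Type*) [Field K] [AddCommGroup V] [Module K V] [FiniteDimensional K V]
    (hchar : (2 : K) ≠ 0)
    (hdim : 5 ≤ Module.finrank K V)
    (σ : K ≃+* K) (hσ : ∀ a, σ (σ a) = a)
    (h : V → V → K)
    (hadd₁ : ∀ x x' y, h (x + x') y = h x y + h x' y)
    (hadd₂ : ∀ x y y', h x (y + y') = h x y + h x y')
    (hsmul : ∀ (a b : K) (x y : V), h (a • x) (b • y) = a * σ b * h x y)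
    (hherm : ∀ x y, h x y = σ (h y x))
    (hnondeg : ∀ x, (∀ y, h x y = 0) → x = 0)
    (x₁ x₂ : V) (hli : LinearIndependent K ![x₁, x₂]) :
    (∀ x ∈ Submodule.span K ({x₁, x₂} : Set V),
      ∀ y ∈ Submodule.span K ({x₁, x₂} : Set V), h x y = 0) ↔
    (∀ y₁ y₂ : V, LinearIndependent K ![y₁, y₂] →
      ι K x₁ * ι K x₂ * ι K y₁ * ι K y₂ = 0 →
      h x₁ y₁ * h x₂ y₂ - h x₁ y₂ * h x₂ y₁ = 0) := by
  classical
  -- basic consequences of the axioms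
  have hsm₁ : ∀ (a : K) (x y : V), h (a • x) y = a * h x y := by
    intro a x y
    have := hsmul a 1 x y
    simpa using this
  have hsm₂ : ∀ (b : K) (x y : V), h x (b • y) = σ b * h x y := by
    intro b x y
    have := hsmul 1 b x y
    simpa using this
  have h0₂ : ∀ x, h x 0 = 0 := by
    intro x
    have := hadd₂ x 0 0
    simp only [add_zero] at this
    linear_combination -this
  have hneg₂ : ∀ x y, h x (-y) = -h x y := by
    intro x y
    have := hadd₂ x y (-y)
    rw [add_neg_cancel, h0₂] at this
    linear_combination -this
  have hsub₁ : ∀ x x' y, h (x - x') y = h x y - h x' y := by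
    intro x x' y
    have h1 := hadd₁ (x - x') x' y
    rw [sub_add_cancel] at h1
    linear_combination -h1
  -- extracting coefficients from the pair x₁, x₂
  have hpair : ∀ a b : K, a • x₁ + b • x₂ = 0 → a = 0 ∧ b = 0 := by
    intro a b hab
    have := Fintype.linearIndependent_iff.mp hli ![a, b] ?_
    · exact ⟨this 0, this 1⟩
    · simpa [Fin.sum_univ_two] using hab
  have hx₁mem : x₁ ∈ Submodule.span K ({x₁, x₂} : Set V) :=
    Submodule.subset_span (Set.mem_insert _ _)
  have hx₂mem : x₂ ∈ Submodule.span K ({x₁, x₂} : Set V) :=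
    Submodule.subset_span (Set.mem_insert_of_mem _ rfl)
  have hσ0 : ∀ a : K, σ a = 0 → a = 0 := by
    intro a ha
    have : σ (σ a) = σ 0 := by rw [ha]
    rwa [hσ, map_zero] at this
  have hx₁ne : x₁ ≠ 0 := by
    have := hli.ne_zero 0
    simpa using this
  have hx₂ne : x₂ ≠ 0 := by
    have := hli.ne_zero 1
    simpa using this
  constructor
  · -- forward direction
    intro hiso y₁ y₂ hyli hwedge
    -- the four vectors are linearly dependent
    have hdep : ¬ LinearIndependent K ![x₁, x₂, y₁, y₂] := by
      intro hind
      refine wedge_ne_zero_s7 ![x₁, x₂, y₁, y₂] hind ?_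
      simpa using hwedge
    obtain ⟨g, hsum, i, hgi⟩ := Fintype.not_linearIndependent_iff.mp hdep
    have hsum' : (g 0 • x₁ + g 1 • x₂) + (g 2 • y₁ + g 3 • y₂) = 0 := by
      have := hsum
      simp only [Fin.sum_univ_four, Matrix.cons_val_zero, Matrix.cons_val_one,
        Matrix.head_cons, Matrix.cons_val_two, Matrix.tail_cons, Matrix.cons_val_three] at this
      rw [← this]
      abel
    have hwmem : g 0 • x₁ + g 1 • x₂ ∈ Submodule.span K ({x₁, x₂} : Set V) :=
      Submodule.mem_span_pair.mpr ⟨_, _, rfl⟩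
    have hwy : g 2 • y₁ + g 3 • y₂ = -(g 0 • x₁ + g 1 • x₂) :=
      eq_neg_of_add_eq_zero_right hsum'
    have hcd : ¬ (g 2 = 0 ∧ g 3 = 0) := by
      rintro ⟨hc, hd⟩
      rw [hc, hd, zero_smul, zero_smul, add_zero, add_zero] at hsum'
      obtain ⟨ha, hb⟩ := hpair _ _ hsum'
      fin_cases i
      · exact hgi ha
      · exact hgi hb
      · exact hgi hc
      · exact hgi hd
    -- the isotropy relations
    have E : ∀ x ∈ Submodule.span K ({x₁, x₂} : Set V),
        σ (g 2) * h x y₁ + σ (g 3) * h x y₂ = 0 := by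
      intro x hx
      have h2 : h x (g 2 • y₁ + g 3 • y₂) = 0 := by
        rw [hwy, hneg₂, hiso x hx _ hwmem, neg_zero]
      rw [hadd₂, hsm₂, hsm₂] at h2
      exact h2
    have E1 := E x₁ hx₁mem
    have E2 := E x₂ hx₂mem
    have hD1 : σ (g 2) * (h x₁ y₁ * h x₂ y₂ - h x₁ y₂ * h x₂ y₁) = 0 := by
      linear_combination h x₂ y₂ * E1 - h x₁ y₂ * E2
    have hD2 : σ (g 3) * (h x₁ y₁ * h x₂ y₂ - h x₁ y₂ * h x₂ y₁) = 0 := by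
      linear_combination h x₁ y₁ * E2 - h x₂ y₁ * E1
    by_cases hc : g 2 = 0
    · have hd : g 3 ≠ 0 := fun hd => hcd ⟨hc, hd⟩
      have : σ (g 3) ≠ 0 := fun hh => hd (hσ0 _ hh)
      exact (mul_eq_zero.mp hD2).resolve_left this
    · have : σ (g 2) ≠ 0 := fun hh => hc (hσ0 _ hh)
      exact (mul_eq_zero.mp hD1).resolve_left this
  · -- reverse direction
    intro H
    -- anticommutation helper: ι x * ι y = -(ι y * ι x)
    have hanti : ∀ u v : V, ι K u * ι K v = -(ι K v * ι K u) := by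
      intro u v
      exact eq_neg_of_add_eq_zero_left (ι_add_mul_swap (R := K) u v)
    -- wedge with a repeated x₁ or x₂ vanishes
    have hwedge₁ : ∀ z : V, ι K x₁ * ι K x₂ * ι K x₁ * ι K z = 0 := by
      intro z
      have : ι K x₁ * ι K x₂ * ι K x₁ = 0 := by
        rw [mul_assoc, hanti x₂ x₁, mul_neg, ← mul_assoc, ι_sq_zero, zero_mul, neg_zero]
      rw [this, zero_mul]
    have hwedge₂ : ∀ z : V, ι K x₁ * ι K x₂ * ι K x₂ * ι K z = 0 := by
      intro z
      have : ι K x₁ * ι K x₂ * ι K x₂ = 0 := by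
        rw [mul_assoc, ι_sq_zero, mul_zero]
      rw [this, zero_mul]
    -- relation A for all z
    have A : ∀ z : V, h x₁ x₁ * h x₂ z - h x₂ x₁ * h x₁ z = 0 := by
      intro z
      by_cases hz : LinearIndependent K ![x₁, z]
      · have := H x₁ z hz (hwedge₁ z)
        linear_combination this
      · have : ¬ ∀ a : K, a • x₁ ≠ z :=
          fun hall => hz ((LinearIndependent.pair_iff' hx₁ne).mpr hall)
        push_neg at this
        obtain ⟨t, ht⟩ := this
        rw [← ht, hsm₂, hsm₂]
        ring
    have B : ∀ z : V, h x₁ x₂ * h x₂ z - h x₂ x₂ * h x₁ z = 0 := by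
      intro z
      by_cases hz : LinearIndependent K ![x₂, z]
      · have := H x₂ z hz (hwedge₂ z)
        linear_combination this
      · have : ¬ ∀ a : K, a • x₂ ≠ z :=
          fun hall => hz ((LinearIndependent.pair_iff' hx₂ne).mpr hall)
        push_neg at this
        obtain ⟨t, ht⟩ := this
        rw [← ht, hsm₂, hsm₂]
        ring
    -- from A, B and nondegeneracy
    have hA0 : (h x₁ x₁) • x₂ - (h x₂ x₁) • x₁ = 0 := by
      apply hnondeg
      intro z
      rw [hsub₁, hsm₁, hsm₁]
      exact A z
    have hB0 : (h x₁ x₂) • x₂ - (h x₂ x₂) • x₁ = 0 := by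
      apply hnondeg
      intro z
      rw [hsub₁, hsm₁, hsm₁]
      exact B z
    have hA0' : (-(h x₂ x₁)) • x₁ + (h x₁ x₁) • x₂ = 0 := by
      rw [neg_smul, add_comm, ← sub_eq_add_neg]; exact hA0
    have hB0' : (-(h x₂ x₂)) • x₁ + (h x₁ x₂) • x₂ = 0 := by
      rw [neg_smul, add_comm, ← sub_eq_add_neg]; exact hB0
    obtain ⟨h21, h11⟩ := hpair _ _ hA0'
    obtain ⟨h22, h12⟩ := hpair _ _ hB0'
    have h21' : h x₂ x₁ = 0 := by linear_combination -h21
    have h22' : h x₂ x₂ = 0 := by linear_combination -h22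
    -- now conclude total isotropy
    intro x hx y hy
    obtain ⟨a, b, rfl⟩ := Submodule.mem_span_pair.mp hx
    obtain ⟨e, f, rfl⟩ := Submodule.mem_span_pair.mp hy
    rw [hadd₁, hadd₂, hadd₂, hsmul, hsmul, hsmul, hsmul,
      h11, h12, h21', h22']
    ring
end
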